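/- The two-node exponentially fitted rule w(F(c) + F(−c)), with w and c satisfying wω cos(ωc) = sin ω and wcω² sin(ωc) = sin ω − ω cos ω, is exact for F(x) = e^{iωx}, F(x) = x e^{iωx}, F(x) = e^{−iωx}, and F(x) = x e^{−iωx}. -/

import Mathlib

open Complex intervalIntegral

lemma integral_x_exp_mul_complex {k : ℂ} (hk : k ≠ 0) (a b : ℝ) :
    (∫ x in a..b, (x : ℂ) * Complex.exp (k * x)) =
      ((b / k - 1 / k ^ 2) * Complex.exp (k * b)
        - ((a / k - 1 / k ^ 2) * Complex.exp (k * a))) := by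
  have D : ∀ x : ℝ, HasDerivAt (fun y : ℝ => ((y : ℂ) / k - 1 / k ^ 2) * Complex.exp (k * y))
      ((x : ℂ) * Complex.exp (k * x)) x := by
    intro x
    have he : HasDerivAt (fun y : ℝ => Complex.exp (k * y)) (k * Complex.exp (k * x)) x := by
      have := ((Complex.hasDerivAt_exp (k * x)).comp x
        (((hasDerivAt_id (x : ℂ)).const_mul k).comp_ofReal))
      simpa [mul_comm, Function.comp_def] using this
    have hl : HasDerivAt (fun y : ℝ => ((y : ℂ) / k - 1 / k ^ 2)) (1 / k) x := by
      have := ((Complex.ofRealCLM.hasDerivAt (x := x)).div_const k).sub_const (1 / k ^ 2)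
      simpa [one_div] using this
    have := hl.mul he
    refine this.congr_deriv ?_
    field_simp
    ring
  rw [intervalIntegral.integral_eq_sub_of_hasDerivAt (fun x _ => D x)
    (((Complex.continuous_ofReal.mul (Complex.continuous_exp.comp
      (continuous_const.mul Complex.continuous_ofReal)))).intervalIntegrable _ _)]

theorem stmt_12 (w c ω : ℝ) (hω : 0 < ω)
    (h1 : w * ω * Real.cos (ω * c) = Real.sin ω)
    (h2 : w * c * ω ^ 2 * Real.sin (ω * c) = Real.sin ω - ω * Real.cos ω) :
    ((∫ x in (-1 : ℝ)..1, Complex.exp (Complex.I * ω * x)) =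
        w * Complex.exp (Complex.I * ω * c) + w * Complex.exp (Complex.I * ω * (-c))) ∧
    ((∫ x in (-1 : ℝ)..1, (x : ℂ) * Complex.exp (Complex.I * ω * x)) =
        w * ((c : ℂ) * Complex.exp (Complex.I * ω * c)) +
          w * ((-c : ℂ) * Complex.exp (Complex.I * ω * (-c)))) ∧
    ((∫ x in (-1 : ℝ)..1, Complex.exp (-(Complex.I * ω * x))) =
        w * Complex.exp (-(Complex.I * ω * c)) + w * Complex.exp (-(Complex.I * ω * (-c)))) ∧
    ((∫ x in (-1 : ℝ)..1, (x : ℂ) * Complex.exp (-(Complex.I * ω * x))) =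
        w * ((c : ℂ) * Complex.exp (-(Complex.I * ω * c))) +
          w * ((-c : ℂ) * Complex.exp (-(Complex.I * ω * (-c))))) := by
  have hω0 : (ω : ℂ) ≠ 0 := by exact_mod_cast hω.ne'
  have hk : Complex.I * ω ≠ 0 := mul_ne_zero Complex.I_ne_zero hω0
  have hk' : -(Complex.I * ω) ≠ 0 := neg_ne_zero.mpr hk
  have h1c : (w : ℂ) * ω * Complex.cos (ω * c) = Complex.sin ω := by
    exact_mod_cast congrArg (Complex.ofReal ·) h1
  have h2c : (w : ℂ) * c * ω ^ 2 * Complex.sin (ω * c) =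
      Complex.sin ω - ω * Complex.cos ω := by
    exact_mod_cast congrArg (Complex.ofReal ·) h2
  have Eul : ∀ z : ℂ, Complex.exp (Complex.I * ω * z) =
      Complex.cos ((ω : ℂ) * z) + Complex.sin ((ω : ℂ) * z) * Complex.I := by
    intro z
    rw [show Complex.I * ω * z = ((ω : ℂ) * z) * Complex.I by ring, Complex.exp_mul_I]
  have e1 : Complex.exp (Complex.I * ω) = Complex.cos ω + Complex.sin ω * Complex.I := by
    simpa using Eul 1
  have e2 : Complex.exp (-(Complex.I * ω)) =
      Complex.cos ω - Complex.sin ω * Complex.I := by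
    have := Eul (-1)
    simpa [Complex.cos_neg, Complex.sin_neg, sub_eq_add_neg] using this
  have e3 : Complex.exp (Complex.I * ω * c) =
      Complex.cos ((ω : ℂ) * c) + Complex.sin ((ω : ℂ) * c) * Complex.I := Eul c
  have e4 : Complex.exp (-(Complex.I * ω * c)) =
      Complex.cos ((ω : ℂ) * c) - Complex.sin ((ω : ℂ) * c) * Complex.I := by
    have := Eul (-(c : ℂ))
    rw [mul_neg] at this
    simpa [Complex.cos_neg, Complex.sin_neg, sub_eq_add_neg] using this
  have hk1 : (1 : ℂ) / (Complex.I * ω) = -(Complex.I / ω) := by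
    rw [div_mul_eq_div_div, Complex.div_I]
    field_simp
  have hk2 : (1 : ℂ) / (Complex.I * ω) ^ 2 = -(1 / (ω : ℂ) ^ 2) := by
    rw [mul_pow, Complex.I_sq]
    field_simp
  refine ⟨?_, ?_, ?_, ?_⟩
  · rw [integral_exp_mul_complex hk, div_eq_iff hk]
    simp only [Complex.ofReal_neg, Complex.ofReal_one, mul_neg, mul_one]
    rw [e1, e2, e3, e4]
    linear_combination (-2 * Complex.I) * h1c
  · rw [integral_x_exp_mul_complex hk]
    simp only [Complex.ofReal_neg, Complex.ofReal_one, mul_neg, mul_one, neg_div]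
    rw [e1, e2, e3, e4, hk1, hk2]
    field_simp
    linear_combination (-2 * Complex.I) * h2c
  · have hfun : (fun x : ℝ => Complex.exp (-(Complex.I * ω * x))) =
        fun x : ℝ => Complex.exp ((-(Complex.I * ω)) * x) := by
      funext x; ring_nf
    rw [hfun, integral_exp_mul_complex hk', div_eq_iff hk']
    simp only [Complex.ofReal_neg, Complex.ofReal_one, neg_mul, mul_neg, mul_one, neg_neg]
    rw [e1, e2, e3, e4]
    linear_combination (2 * Complex.I) * h1c
  · have hfun : (fun x : ℝ => (x : ℂ) * Complex.exp (-(Complex.I * ω * x))) =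
        fun x : ℝ => (x : ℂ) * Complex.exp ((-(Complex.I * ω)) * x) := by
      funext x; ring_nf
    rw [hfun, integral_x_exp_mul_complex hk']
    have hk1' : (1 : ℂ) / (-(Complex.I * ω)) = Complex.I / ω := by
      rw [div_neg, hk1, neg_neg]
    have hk2' : (1 : ℂ) / (-(Complex.I * ω)) ^ 2 = -(1 / (ω : ℂ) ^ 2) := by
      rw [neg_sq]; exact hk2
    simp only [Complex.ofReal_neg, Complex.ofReal_one, neg_mul, mul_neg, mul_one, neg_neg,
      neg_div, div_neg]
    rw [e1, e2, e3, e4, hk1, hk2']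
    field_simp
    linear_combination (2 * Complex.I) * h2c
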